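/- Let n, B be positive integers, γ > 0, δ ≥ 0, and let λ1 ≥ λ2 ≥ … ≥ λ_d > 0 with γ < γ̄ := 2nB(λ1² + nδ)/(λ1² Σ_{i=1}^d λ_i²). Set ϑ := 2 + 2nB(λ1² + nδ)/(γλ1⁴) − (Σ_{i=1}^d λ_i²)/λ1². Then for every ρ with 2 ≤ ρ < ϑ, the infimum of q(·, ρ) over the interval [λ_d², λ1²] is strictly positive: inf_{m ∈ [λ_d², λ1²]} q(m, ρ) > 0, where q(m, ρ) := 2nB(m + nδ)/γ − (Σ_{i=1}^d λ_i²)·m + (2 − ρ)m². -/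

import Mathlib

open Finset

/-- The auxiliary quadratic `q(m, ρ) = 2nB(m + nδ)/γ − T·m + (2 − ρ)m²`,
where `T = Σ_{i=1}^d λ_i²`. -/
noncomputable def qAux (n B : ℕ) (γ δ T m ρ : ℝ) : ℝ :=
  2 * n * B * (m + n * δ) / γ - T * m + (2 - ρ) * m ^ 2

theorem qAux_inf_pos (n B d : ℕ) (hn : 0 < n) (hB : 0 < B) (hd : 0 < d)
    (γ δ : ℝ) (hγ : 0 < γ) (hδ : 0 ≤ δ)
    (lam : Fin d → ℝ) (hpos : ∀ i, 0 < lam i)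
    (hdec : ∀ i j : Fin d, i ≤ j → lam j ≤ lam i)
    (hbar : γ < 2 * n * B * ((lam ⟨0, hd⟩) ^ 2 + n * δ) /
      ((lam ⟨0, hd⟩) ^ 2 * ∑ i, lam i ^ 2)) :
    ∀ ρ : ℝ, 2 ≤ ρ →
      ρ < 2 + 2 * n * B * ((lam ⟨0, hd⟩) ^ 2 + n * δ) / (γ * (lam ⟨0, hd⟩) ^ 4) -
        (∑ i, lam i ^ 2) / (lam ⟨0, hd⟩) ^ 2 →
      0 < sInf ((fun m => qAux n B γ δ (∑ i, lam i ^ 2) m ρ) ''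
        Set.Icc ((lam ⟨d - 1, by omega⟩) ^ 2) ((lam ⟨0, hd⟩) ^ 2)) := by
  intro ρ hρ2 hρϑ
  set T : ℝ := ∑ i, lam i ^ 2 with hT
  set L : ℝ := (lam ⟨0, hd⟩) ^ 2 with hL
  set a : ℝ := (lam ⟨d - 1, by omega⟩) ^ 2 with ha
  have hL0 : 0 < L := pow_pos (hpos _) 2
  have ha0 : 0 < a := pow_pos (hpos _) 2
  have haL : a ≤ L := by
    apply pow_le_pow_left₀ (hpos _).le
    exact hdec ⟨0, hd⟩ ⟨d - 1, by omega⟩ (by simp [Fin.le_def])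
  have hL4 : (lam ⟨0, hd⟩) ^ 4 = L ^ 2 := by rw [hL]; ring
  -- positivity of the (γ-scaled) quadratic at the right endpoint L
  have hqL : 0 < 2 * n * B * (L + n * δ) - γ * T * L + γ * (2 - ρ) * L ^ 2 := by
    rw [hL4] at hρϑ
    have hpc : (0:ℝ) < γ * L ^ 2 := by positivity
    have h1 : ρ * (γ * L ^ 2)
        < (2 + 2 * n * B * (L + n * δ) / (γ * L ^ 2) - T / L) * (γ * L ^ 2) :=
      mul_lt_mul_of_pos_right hρϑ hpc
    have h2 : (2 + 2 * (n:ℝ) * B * (L + n * δ) / (γ * L ^ 2) - T / L) * (γ * L ^ 2)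
        = 2 * (γ * L ^ 2) + 2 * n * B * (L + n * δ) - γ * T * L := by
      field_simp
    rw [h2] at h1
    nlinarith [h1]
  -- pointwise positivity on [a, L]
  have key : ∀ m ∈ Set.Icc a L, 0 < qAux n B γ δ T m ρ := by
    intro m hm
    obtain ⟨ham, hmL⟩ := hm
    have hm0 : 0 < m := lt_of_lt_of_le ha0 ham
    have hrw : qAux n B γ δ T m ρ
        = (2 * n * B * (m + n * δ) - γ * T * m + γ * (2 - ρ) * m ^ 2) / γ := by
      unfold qAux; field_simp
    rw [hrw]
    apply div_pos _ hγ
    have hfac : 0 ≤ (L - m) * (2 * (n:ℝ) * B * (n * δ) + γ * (ρ - 2) * L * m) := by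
      apply mul_nonneg (by linarith)
      have h1 : 0 ≤ 2 * (n:ℝ) * B * (n * δ) := by positivity
      have h2 : 0 ≤ γ * (ρ - 2) * L * m := by
        apply mul_nonneg (mul_nonneg (mul_nonneg hγ.le (by linarith)) hL0.le) hm0.le
      linarith
    nlinarith [mul_pos hm0 hqL, hL0, hfac]
  -- the infimum is attained by compactness
  have hcont : Continuous fun m : ℝ => qAux n B γ δ T m ρ := by
    unfold qAux
    fun_prop
  have hne : (Set.Icc a L).Nonempty := ⟨a, le_refl a, haL⟩
  have hcomp : IsCompact ((fun m => qAux n B γ δ T m ρ) '' Set.Icc a L) :=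
    (isCompact_Icc).image hcont
  have himne : ((fun m => qAux n B γ δ T m ρ) '' Set.Icc a L).Nonempty :=
    hne.image _
  obtain ⟨m, hmmem, hmeq⟩ := hcomp.sInf_mem himne
  rw [← hmeq]
  exact key m hmmem
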